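/- (Proposition 2) Under the federated setup with mutually uncorrelated noises satisfying 𝔼[e⁽ⁱ⁾ (e⁽ʲ⁾)ᵀ] = 0 for i ≠ j and 𝔼[e⁽ⁱ⁾ (e⁽ⁱ⁾)ᵀ] = σᵢ² I (all outer products entrywise integrable), the dispersion matrix Ω = 𝔼[(y^fed − ȳ₀)(y^fed − ȳ₀)ᵀ] satisfies the operator-norm bound ‖Ω‖₂ ≤ (α⁽⁰⁾)² σ₀² + Σ_{i=1}^{M-1} (α⁽ⁱ⁾)² ( ‖Δ⁽ⁱ⁾(Δ⁽ⁱ⁾)ᵀ‖₂ + σᵢ² ) + Σ_{i=1}^{M-1} Σ_{j=1, j≠i}^{M-1} α⁽ⁱ⁾ α⁽ʲ⁾ ‖Δ⁽ⁱ⁾(Δ⁽ʲ⁾)ᵀ‖₂, where ‖A‖₂ denotes the induced 2-norm (largest singular value) of a matrix A, so that ‖Δ⁽ⁱ⁾(Δ⁽ⁱ⁾)ᵀ‖₂ and ‖Δ⁽ⁱ⁾(Δ⁽ʲ⁾)ᵀ‖₂ are the largest singular values ρ_max(Ω_Δ^(i)) and ρ_max(Ω_Δ^(i,j)) of the dissimilarity-induced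 dispersion matrices. -/

import Mathlib

open MeasureTheory Finset Filter

/-- The induced 2-norm (operator norm with respect to the Euclidean norm, i.e. the
largest singular value) of a real square matrix. -/
noncomputable def inducedTwoNorm {n : ℕ} (A : Matrix (Fin n) (Fin n) ℝ) : ℝ :=
  ‖Matrix.toEuclideanCLM (𝕜 := ℝ) A‖

lemma inducedTwoNorm_nonneg {n : ℕ} (A : Matrix (Fin n) (Fin n) ℝ) : 0 ≤ inducedTwoNorm A :=
  norm_nonneg _

set_option synthInstance.maxHeartbeats 1000000 in
lemma inducedTwoNorm_add_le {n : ℕ} (A B : Matrix (Fin n) (Fin n) ℝ) :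
    inducedTwoNorm (A + B) ≤ inducedTwoNorm A + inducedTwoNorm B := by
  unfold inducedTwoNorm; rw [map_add]; exact norm_add_le _ _

set_option synthInstance.maxHeartbeats 1000000 in
lemma inducedTwoNorm_sum_le {n : ℕ} {ι : Type*} (s : Finset ι)
    (f : ι → Matrix (Fin n) (Fin n) ℝ) :
    inducedTwoNorm (∑ i ∈ s, f i) ≤ ∑ i ∈ s, inducedTwoNorm (f i) := by
  unfold inducedTwoNorm; rw [map_sum]; exact norm_sum_le _ _

set_option synthInstance.maxHeartbeats 1000000 in
lemma inducedTwoNorm_smul {n : ℕ} (c : ℝ) (A : Matrix (Fin n) (Fin n) ℝ) :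
    inducedTwoNorm (c • A) = |c| * inducedTwoNorm A := by
  unfold inducedTwoNorm
  rw [_root_.map_smul]
  exact (norm_smul c (Matrix.toEuclideanCLM (𝕜 := ℝ) A)).trans (by rw [Real.norm_eq_abs])

set_option synthInstance.maxHeartbeats 1000000 in
lemma inducedTwoNorm_one_le {n : ℕ} :
    inducedTwoNorm (1 : Matrix (Fin n) (Fin n) ℝ) ≤ 1 := by
  unfold inducedTwoNorm
  rw [map_one, ContinuousLinearMap.one_def]
  exact ContinuousLinearMap.norm_id_le

set_option synthInstance.maxHeartbeats 1000000 in
lemma inducedTwoNorm_zero {n : ℕ} :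
    inducedTwoNorm (0 : Matrix (Fin n) (Fin n) ℝ) = 0 := by
  unfold inducedTwoNorm; rw [map_zero, norm_zero]

/-- **Proposition 2 of the paper.** Under the federated setup with mutually uncorrelated
noises having isotropic covariances `σᵢ² I`, the induced 2-norm of the dispersion matrix
`Ω = 𝔼[(y^fed − ȳ₀)(y^fed − ȳ₀)ᵀ]` is bounded by the weighted contributions of the
noise variances and of the largest singular values of the dissimilarity-induced
dispersion matrices `Δ⁽ⁱ⁾(Δ⁽ʲ⁾)ᵀ`. -/
theorem federated_dispersion_bound
    {n M : ℕ} (hM : 1 ≤ M)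
    {Ω : Type*} [MeasurableSpace Ω] (μ : Measure Ω) [IsProbabilityMeasure μ]
    -- noiseless nominal output trajectory
    (ybar : Fin n → ℝ)
    -- deterministic discrepancy vectors, with zero discrepancy for the nominal system
    (Δ : Fin M → Fin n → ℝ) (hΔ0 : Δ ⟨0, hM⟩ = 0)
    -- weights in [0,1] summing to one
    (α : Fin M → ℝ) (hα0 : ∀ i, 0 ≤ α i) (hα1 : ∀ i, α i ≤ 1)
    (hαsum : ∑ i, α i = 1)
    -- noise standard deviations
    (σ : Fin M → ℝ) (hσ0 : ∀ i, 0 ≤ σ i)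
    -- zero-mean integrable measurement noises
    (e : Fin M → Ω → Fin n → ℝ)
    (he_int : ∀ i, Integrable (e i) μ)
    (he_mean : ∀ i, ∫ ω, e i ω ∂μ = 0)
    -- entrywise integrability of all noise outer products
    (hout_int : ∀ i j : Fin M, ∀ a b : Fin n,
      Integrable (fun ω => e i ω a * e j ω b) μ)
    -- mutually uncorrelated noises: 𝔼[e⁽ⁱ⁾ (e⁽ʲ⁾)ᵀ] = 0 for i ≠ j
    (he_cross : ∀ i j : Fin M, i ≠ j → ∀ a b : Fin n,
      ∫ ω, e i ω a * e j ω b ∂μ = 0)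
    -- isotropic covariances: 𝔼[e⁽ⁱ⁾ (e⁽ⁱ⁾)ᵀ] = σᵢ² I
    (he_cov : ∀ i : Fin M, ∀ a b : Fin n,
      ∫ ω, e i ω a * e i ω b ∂μ = (σ i ^ 2 • (1 : Matrix (Fin n) (Fin n) ℝ)) a b)
    -- measured trajectories and the federated trajectory
    (y : Fin M → Ω → Fin n → ℝ)
    (hy : ∀ i ω, y i ω = ybar + Δ i + e i ω)
    (yfed : Ω → Fin n → ℝ)
    (hyfed : ∀ ω, yfed ω = ∑ i, α i • y i ω)
    -- the dispersion matrix, defined entrywise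
    (Ωdisp : Matrix (Fin n) (Fin n) ℝ)
    (hΩdisp : ∀ a b : Fin n,
      Ωdisp a b = ∫ ω, (yfed ω a - ybar a) * (yfed ω b - ybar b) ∂μ) :
    inducedTwoNorm Ωdisp
      ≤ (α ⟨0, hM⟩) ^ 2 * σ ⟨0, hM⟩ ^ 2
        + ∑ i ∈ Finset.univ.erase ⟨0, hM⟩,
            (α i) ^ 2 * (inducedTwoNorm (Matrix.vecMulVec (Δ i) (Δ i)) + σ i ^ 2)
        + ∑ i ∈ Finset.univ.erase ⟨0, hM⟩,
            ∑ j ∈ (Finset.univ.erase (⟨0, hM⟩ : Fin M)).erase i,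
              α i * α j * inducedTwoNorm (Matrix.vecMulVec (Δ i) (Δ j)) := by
  classical
  set z : Fin M := ⟨0, hM⟩ with hz
  -- componentwise integrability and zero mean
  have heI : ∀ (i : Fin M) (a : Fin n), Integrable (fun ω => e i ω a) μ := fun i a =>
    (ContinuousLinearMap.proj (R := ℝ) (φ := fun _ : Fin n => ℝ) a).integrable_comp (he_int i)
  have heM : ∀ (i : Fin M) (a : Fin n), ∫ ω, e i ω a ∂μ = 0 := by
    intro i a
    calc ∫ ω, e i ω a ∂μ
        = (∫ ω, e i ω ∂μ) a :=
          (ContinuousLinearMap.proj (R := ℝ) (φ := fun _ : Fin n => ℝ) a).integral_comp_comm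
            (he_int i)
      _ = 0 := by rw [he_mean i]; rfl
  -- the centered federated trajectory
  have hdiff : ∀ (ω : Ω) (c : Fin n),
      yfed ω c - ybar c = ∑ i, α i * (Δ i c + e i ω c) := by
    intro ω c
    have h1 : yfed ω c = ∑ i, (α i * ybar c + α i * (Δ i c + e i ω c)) := by
      rw [hyfed ω]
      simp only [Finset.sum_apply, Pi.smul_apply, smul_eq_mul, hy, Pi.add_apply]
      exact Finset.sum_congr rfl fun i _ => by ring
    rw [h1, Finset.sum_add_distrib, ← Finset.sum_mul, hαsum, one_mul]
    ring
  -- entrywise formula for the dispersion matrix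
  have key : ∀ a b : Fin n, Ωdisp a b =
      (∑ i, ∑ j, (α i * α j) * (Δ i a * Δ j b))
      + (∑ i, α i ^ 2 * σ i ^ 2) * (if a = b then 1 else 0) := by
    intro a b
    have hterm : ∀ (i j : Fin M),
        (fun ω => (α i * (Δ i a + e i ω a)) * (α j * (Δ j b + e j ω b)))
        = fun ω => (α i * α j * (Δ i a * Δ j b))
            + ((α i * α j * Δ i a) * e j ω b
            + ((α i * α j * Δ j b) * e i ω a
            + (α i * α j) * (e i ω a * e j ω b))) := by
      intro i j; funext ω; ring
    have hint2 : ∀ i j : Fin M,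
        Integrable (fun ω => (α i * α j * Δ i a) * e j ω b
            + ((α i * α j * Δ j b) * e i ω a
            + (α i * α j) * (e i ω a * e j ω b))) μ :=
      fun i j => ((heI j b).const_mul _).add
        (((heI i a).const_mul _).add ((hout_int i j a b).const_mul _))
    have hint : ∀ i j : Fin M,
        Integrable (fun ω => (α i * (Δ i a + e i ω a)) * (α j * (Δ j b + e j ω b))) μ := by
      intro i j
      rw [hterm i j]
      exact (integrable_const _).add (hint2 i j)
    have hEterm : ∀ i j : Fin M,
        ∫ ω, (α i * (Δ i a + e i ω a)) * (α j * (Δ j b + e j ω b)) ∂μ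
        = α i * α j * (Δ i a * Δ j b) + (α i * α j) * ∫ ω, e i ω a * e j ω b ∂μ := by
      intro i j
      have hg1 : Integrable (fun ω => (α i * α j * Δ j b) * e i ω a
          + (α i * α j) * (e i ω a * e j ω b)) μ :=
        ((heI i a).const_mul _).add ((hout_int i j a b).const_mul _)
      have hg2 : Integrable (fun ω => (α i * α j * Δ i a) * e j ω b) μ :=
        (heI j b).const_mul _
      have h2 : ∫ ω, (α i * α j * Δ i a) * e j ω b ∂μ = 0 := by
        rw [integral_const_mul, heM, mul_zero]
      have h3 : ∫ ω, (α i * α j * Δ j b) * e i ω a ∂μ = 0 := by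
        rw [integral_const_mul, heM, mul_zero]
      have h4 : ∫ ω, (α i * α j) * (e i ω a * e j ω b) ∂μ
          = (α i * α j) * ∫ ω, e i ω a * e j ω b ∂μ := integral_const_mul _ _
      rw [hterm i j,
        integral_add (integrable_const _) (hint2 i j),
        integral_add hg2 hg1,
        integral_add ((heI i a).const_mul (α i * α j * Δ j b))
          ((hout_int i j a b).const_mul (α i * α j)),
        h2, h3, h4, integral_const]
      simp
    have hee : ∀ i j : Fin M, ∫ ω, e i ω a * e j ω b ∂μ
        = if i = j then σ i ^ 2 * (if a = b then 1 else 0) else 0 := by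
      intro i j
      by_cases h : i = j
      · subst h
        rw [he_cov i a b]
        simp [Matrix.smul_apply, Matrix.one_apply]
      · simp [h, he_cross i j h a b]
    have hfun : (fun ω => (yfed ω a - ybar a) * (yfed ω b - ybar b))
        = fun ω => ∑ i, ∑ j, (α i * (Δ i a + e i ω a)) * (α j * (Δ j b + e j ω b)) := by
      funext ω
      rw [hdiff ω a, hdiff ω b, Finset.sum_mul_sum]
    rw [hΩdisp a b, hfun,
      integral_finset_sum _ (fun i _ => integrable_finset_sum _ (fun j _ => hint i j))]
    have hswap : ∀ i : Fin M,
        ∫ ω, ∑ j, (α i * (Δ i a + e i ω a)) * (α j * (Δ j b + e j ω b)) ∂μ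
        = ∑ j, (α i * α j * (Δ i a * Δ j b)
            + (α i * α j) * (if i = j then σ i ^ 2 * (if a = b then 1 else 0) else 0)) := by
      intro i
      rw [integral_finset_sum _ (fun j _ => hint i j)]
      exact Finset.sum_congr rfl fun j _ => by rw [hEterm i j, hee i j]
    rw [Finset.sum_congr rfl fun i _ => hswap i]
    rw [Finset.sum_congr rfl fun i (_ : i ∈ univ) => Finset.sum_add_distrib,
      Finset.sum_add_distrib]
    congr 1
    rw [Finset.sum_mul]
    refine Finset.sum_congr rfl fun i _ => ?_
    rw [Finset.sum_eq_single i]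
    · simp only [eq_self_iff_true, if_true]; ring
    · intro j _ hji; simp [Ne.symm hji]
    · intro h; exact absurd (Finset.mem_univ i) h
  -- matrix form
  have hmat : Ωdisp = (∑ i, ∑ j, (α i * α j) • Matrix.vecMulVec (Δ i) (Δ j))
      + (∑ i, α i ^ 2 * σ i ^ 2) • (1 : Matrix (Fin n) (Fin n) ℝ) := by
    ext a b
    rw [key a b]
    by_cases hab : a = b <;>
      simp [Matrix.sum_apply, Matrix.vecMulVec_apply, Matrix.one_apply, hab, Matrix.smul_apply]
  -- abbreviations
  set S : ℝ := ∑ i, α i ^ 2 * σ i ^ 2 with hSdef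
  set N : Fin M → Fin M → ℝ :=
    fun i j => inducedTwoNorm (Matrix.vecMulVec (Δ i) (Δ j)) with hNdef
  have hS0 : (0:ℝ) ≤ S := Finset.sum_nonneg fun i _ => by positivity
  -- norm bound
  have hbound : inducedTwoNorm Ωdisp ≤ (∑ i, ∑ j, α i * α j * N i j) + S := by
    rw [hmat]
    refine le_trans (inducedTwoNorm_add_le _ _) (add_le_add ?_ ?_)
    · refine le_trans (inducedTwoNorm_sum_le _ _) (Finset.sum_le_sum fun i _ => ?_)
      refine le_trans (inducedTwoNorm_sum_le _ _) (Finset.sum_le_sum fun j _ => ?_)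
      rw [inducedTwoNorm_smul, abs_of_nonneg (mul_nonneg (hα0 i) (hα0 j))]
    · calc inducedTwoNorm (S • (1 : Matrix (Fin n) (Fin n) ℝ))
          = |S| * inducedTwoNorm (1 : Matrix (Fin n) (Fin n) ℝ) := inducedTwoNorm_smul _ _
        _ ≤ S * 1 := by
            rw [abs_of_nonneg hS0]
            exact mul_le_mul_of_nonneg_left inducedTwoNorm_one_le hS0
        _ = S := mul_one S
  -- terms involving the nominal index vanish
  have hNz1 : ∀ j, N z j = 0 := by
    intro j
    have : Matrix.vecMulVec (Δ z) (Δ j) = 0 := by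
      ext a b; simp [Matrix.vecMulVec_apply, hΔ0]
    rw [hNdef]; simp only []; rw [this]; exact inducedTwoNorm_zero
  have hNz2 : ∀ i, N i z = 0 := by
    intro i
    have : Matrix.vecMulVec (Δ i) (Δ z) = 0 := by
      ext a b; simp [Matrix.vecMulVec_apply, hΔ0]
    rw [hNdef]; simp only []; rw [this]; exact inducedTwoNorm_zero
  -- restrict the double sum to nonzero indices
  have hdsum : (∑ i, ∑ j, α i * α j * N i j)
      = ∑ i ∈ univ.erase z, ∑ j ∈ univ.erase z, α i * α j * N i j := by
    rw [← Finset.add_sum_erase _ _ (Finset.mem_univ z)]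
    simp only [hNz1, mul_zero, Finset.sum_const_zero, zero_add]
    refine Finset.sum_congr rfl fun i _ => ?_
    rw [← Finset.add_sum_erase _ _ (Finset.mem_univ z)]
    simp [hNz2]
  -- split off diagonal in the restricted double sum
  have hdiag : ∀ i ∈ univ.erase z,
      (∑ j ∈ univ.erase z, α i * α j * N i j)
      = α i ^ 2 * N i i + ∑ j ∈ (univ.erase z).erase i, α i * α j * N i j := by
    intro i hi
    rw [← Finset.add_sum_erase _ _ hi, pow_two]
  -- split off the nominal index in S
  have hSsplit : S = α z ^ 2 * σ z ^ 2 + ∑ i ∈ univ.erase z, α i ^ 2 * σ i ^ 2 := by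
    rw [hSdef, ← Finset.add_sum_erase _ _ (Finset.mem_univ z)]
  -- conclude
  refine le_trans hbound ?_
  rw [hdsum, Finset.sum_congr rfl hdiag, Finset.sum_add_distrib, hSsplit]
  have hexp : ∑ i ∈ univ.erase z, α i ^ 2 * (N i i + σ i ^ 2)
      = (∑ i ∈ univ.erase z, α i ^ 2 * N i i) + ∑ i ∈ univ.erase z, α i ^ 2 * σ i ^ 2 := by
    rw [← Finset.sum_add_distrib]
    exact Finset.sum_congr rfl fun i _ => by ring
  have hNN : ∀ i j : Fin M,
      inducedTwoNorm (Matrix.vecMulVec (Δ i) (Δ j)) = N i j := fun i j => rfl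
  simp only [hNN]
  rw [hexp]
  linarith
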